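/- Let φ_1,...,φ_n ∈ ℂ be nonzero and pairwise distinct, and define r := Σ_{i≠j} (1/(φ_i-φ_j)) (φ_i e^i_j - φ_j e^j_j) ⊗ (e^j_i - e^i_i) acting on ℂ^n⊗ℂ^n. Then r² = -r. -/

import Mathlib

open Matrix Kronecker BigOperators Finset

noncomputable section


/-- The classical r-matrix `r = Σ_{i≠j} (φ_i-φ_j)⁻¹ (φ_i e^i_j - φ_j e^j_j) ⊗ (e^j_i - e^i_i)`,
viewed as an operator on ℂⁿ⊗ℂⁿ via the Kronecker product. -/
def rPhi (n : ℕ) (φ : Fin n → ℂ) : Matrix (Fin n × Fin n) (Fin n × Fin n) ℂ :=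
  ∑ i : Fin n, ∑ j : Fin n, if i ≠ j then
    (φ i - φ j)⁻¹ • ((φ i • single i j (1:ℂ) - φ j • single j j (1:ℂ)) ⊗ₖ
      (single j i (1:ℂ) - single i i (1:ℂ))) else 0

lemma rPhi_apply (n : ℕ) (φ : Fin n → ℂ) (a b c d : Fin n) :
    rPhi n φ (a, b) (c, d) = if d = c then 0 else
      (φ d - φ c)⁻¹ * (((if a = d then φ d else 0) - if a = c then φ c else 0) *
        ((if b = c then 1 else 0) - if b = d then (1:ℂ) else 0)) := by
  rw [rPhi, Matrix.sum_apply]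
  rw [Finset.sum_eq_single d]
  · rw [Matrix.sum_apply, Finset.sum_eq_single c]
    · by_cases h : d = c <;>
        simp [h, kroneckerMap_apply, Matrix.single, mul_sub, sub_mul, eq_comm]
    · intro j _ hj
      by_cases h : d = j <;>
        simp [h, kroneckerMap_apply, Matrix.single, Ne.symm hj, hj, eq_comm]
    · simp
  · intro i _ hi
    rw [Matrix.sum_apply]
    apply Finset.sum_eq_zero
    intro j _
    by_cases h : i = j <;>
      simp [h, kroneckerMap_apply, Matrix.single, hi, Ne.symm hi, eq_comm]
  · simp

/-- The non-skew-symmetric rime r-matrix is (minus-)idempotent: `r² = -r`. -/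
theorem rPhi_sq_eq_neg (n : ℕ) (φ : Fin n → ℂ)
    (h0 : ∀ i, φ i ≠ 0) (hd : ∀ i j, i ≠ j → φ i ≠ φ j) :
    rPhi n φ * rPhi n φ = -(rPhi n φ) := by
  ext ⟨a, b⟩ ⟨c, d⟩
  rw [Matrix.mul_apply, Matrix.neg_apply]
  by_cases hcd : d = c
  · subst hcd
    rw [Finset.sum_eq_zero]
    · rw [rPhi_apply]; simp
    · rintro ⟨e, f⟩ _
      rw [rPhi_apply (d := d)]
      simp
  · have h1 : φ d - φ c ≠ 0 := sub_ne_zero.mpr (hd d c hcd)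
    have h2 : φ c - φ d ≠ 0 := sub_ne_zero.mpr (hd c d (Ne.symm hcd))
    rw [Finset.sum_eq_add_of_mem (c, d) (d, c) (Finset.mem_univ _) (Finset.mem_univ _)
      (by simp [hcd, Ne.symm hcd, Prod.ext_iff])]
    · simp only [rPhi_apply, if_neg hcd, if_neg (Ne.symm hcd)]
      simp [hcd, Ne.symm hcd]
      field_simp
      ring
    · rintro ⟨e, f⟩ _ hk
      obtain ⟨hk1, hk2⟩ := hk
      rw [rPhi_apply, rPhi_apply]
      by_cases hef : f = e
      · simp [hef]
      · by_cases hec : e = c <;> by_cases hed : e = d <;>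
          by_cases hfc : f = c <;> by_cases hfd : f = d <;>
          simp_all [Prod.mk.injEq]
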